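/- Let D_{r₀}(j) be the hyperbolic ball of radius r₀ > 0 centered at j in ℍ³. There exists C = C(r₀) > 0 such that for any two geodesics h₁, h₂ with a common ideal endpoint, both intersecting D_{r₀}(j), and any ε > 0, ‖R_{h₁}^ε ∘ R_{h₂}^{-ε} - id‖ ≤ C · d_{r₀}(h₁, h₂) · ε, where d_{r₀}(h₁, h₂) is the Hausdorff-type hyperbolic distance between h₁ ∩ D_{r₀}(j) and h₂ ∩ D_{r₀}(j). -/

import Mathlib

/-- `e^{iε/2}`. -/
noncomputable def ee (ε : ℝ) : ℂ := Complex.exp (Complex.I * ε / 2)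

/-- The elliptic element of `SL(2,ℂ)` fixing `u, v ∈ ℂ` with rotation angle `ε`:
`T diag(e^{iε/2}, e^{-iε/2}) T⁻¹` with `T = !![v, u; 1, 1]`. -/
noncomputable def rotMat (u v : ℂ) (ε : ℝ) : Matrix (Fin 2) (Fin 2) ℂ :=
  (v - u)⁻¹ • !![v * ee ε - u * ee (-ε), u * v * (ee (-ε) - ee ε);
                 ee ε - ee (-ε), v * ee (-ε) - u * ee ε]

/-- Max-entry norm of a 2×2 complex matrix. -/
noncomputable def mnorm (M : Matrix (Fin 2) (Fin 2) ℂ) : ℝ :=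
  max (max (‖M 0 0‖) (‖M 0 1‖))
      (max (‖M 1 0‖) (‖M 1 1‖))

/-- The geodesic of `ℍ³ ≅ ℂ × ℝ` with ideal endpoints `u, v ∈ ℂ` (a Euclidean semicircle). -/
noncomputable def geodSet (u v : ℂ) : Set (ℂ × ℝ) :=
  {P | ∃ s : ℝ, s ∈ Set.Ioo (0:ℝ) 1 ∧
    P = (u + (s : ℂ) * (v - u), ‖v - u‖ * Real.sqrt (s * (1 - s)))}

/-- `cosh` of the hyperbolic distance between points of `ℍ³ ≅ ℂ × ℝ`. -/
noncomputable def coshDist (P Q : ℂ × ℝ) : ℝ :=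
  1 + (‖P.1 - Q.1‖ ^ 2 + (P.2 - Q.2) ^ 2) / (2 * P.2 * Q.2)

/-- Membership in the hyperbolic ball `D_{r₀}(j)` around `j = ((0:ℂ), 1)`. -/
def inBall (r₀ : ℝ) (P : ℂ × ℝ) : Prop :=
  0 < P.2 ∧ coshDist P ((0 : ℂ), 1) ≤ Real.cosh r₀

lemma ee_mul (ε : ℝ) : ee ε * ee (-ε) = 1 := by
  rw [ee, ee, ← Complex.exp_add, ← Complex.exp_zero]
  congr 1
  push_cast
  ring

lemma ee_ne (ε : ℝ) : ee ε ≠ 0 := Complex.exp_ne_zero _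

set_option maxHeartbeats 1000000 in
lemma prod_eq (u v₁ v₂ : ℂ) (h₁ : v₁ ≠ u) (h₂ : v₂ ≠ u) (ε : ℝ) :
    rotMat u v₁ ε * rotMat u v₂ (-ε) - 1
    = ((v₁ - v₂) * ((ee (-ε))^2 - 1) / ((v₁ - u) * (v₂ - u))) •
      !![u, -u^2; (1:ℂ), -u] := by
  have hd₁ : v₁ - u ≠ 0 := sub_ne_zero.mpr h₁
  have hd₂ : v₂ - u ≠ 0 := sub_ne_zero.mpr h₂
  have ha : ee ε ≠ 0 := ee_ne ε
  have hb : ee (-ε) ≠ 0 := ee_ne _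
  have hneg : ee (-ε) = (ee ε)⁻¹ :=
    eq_inv_of_mul_eq_one_left (by rw [mul_comm]; exact ee_mul ε)
  ext i j
  fin_cases i <;> fin_cases j <;>
  · simp only [rotMat, neg_neg, Matrix.sub_apply, Matrix.mul_apply, Fin.sum_univ_two,
      Matrix.smul_apply, Matrix.one_apply, Matrix.cons_val_zero, Matrix.cons_val_one,
      Matrix.head_cons, Matrix.head_fin_const, Fin.mk_zero, Fin.mk_one, smul_eq_mul,
      if_true, if_false, Fin.zero_eta, Fin.one_eq_zero_iff, Matrix.cons_val', Matrix.cons_val_fin_one,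
      Matrix.empty_val', reduceIte, Matrix.of_apply, Fin.isValue, Fin.reduceEq, zero_ne_one, one_ne_zero]
    rw [hneg]
    field_simp
    ring

lemma mnorm_smul_le (β u : ℂ) :
    mnorm (β • !![u, -u^2; (1:ℂ), -u]) ≤ ‖β‖ * (1 + ‖u‖ ^ 2) := by
  have hb := norm_nonneg β
  have hu := norm_nonneg u
  unfold mnorm
  simp [Matrix.smul_apply, map_mul]
  refine ⟨⟨?_, ?_⟩, ?_, ?_⟩ <;> nlinarith [sq_nonneg (‖u‖ - 1)]

lemma ee_sq_abs (ε : ℝ) (hε : 0 < ε) : ‖(ee (-ε))^2 - 1‖ ≤ 2 * ε := by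
  have h2 : (ee (-ε))^2 = Complex.exp (((-ε : ℝ) : ℂ) * Complex.I) := by
    rw [ee, sq, ← Complex.exp_add]
    congr 1
    push_cast
    ring
  have habs : ‖((-ε : ℝ) : ℂ) * Complex.I‖ = ε := by
    rw [norm_mul, Complex.norm_I, Complex.norm_real, Real.norm_eq_abs, mul_one, abs_neg, abs_of_pos hε]
  rw [h2]
  rcases le_or_gt ε 1 with h | h
  · have := Complex.norm_exp_sub_one_le (x := ((-ε : ℝ) : ℂ) * Complex.I) (by rw [habs]; exact h)
    rwa [habs] at this
  · have h1 : ‖Complex.exp (((-ε : ℝ) : ℂ) * Complex.I)‖ = 1 :=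
      Complex.norm_exp_ofReal_mul_I (-ε)
    calc ‖Complex.exp (((-ε : ℝ) : ℂ) * Complex.I) - 1‖
        ≤ ‖Complex.exp (((-ε : ℝ) : ℂ) * Complex.I)‖ + ‖(1:ℂ)‖ :=
          norm_sub_le _ _
      _ ≤ 2 * ε := by rw [h1]; simp; linarith

/-- facts about a point on the geodesic: positive height and the inversion coordinate. -/
lemma geod_facts {u v : ℂ} (hv : v ≠ u) {P : ℂ × ℝ} (hP : P ∈ geodSet u v) :
    0 < P.2 ∧
    (starRingEnd ℂ) (P.1 - u) / ((Complex.normSq (P.1 - u) + P.2 ^ 2 : ℝ) : ℂ) = (v - u)⁻¹ := by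
  obtain ⟨s, ⟨hs0, hs1⟩, hPe⟩ := hP
  have hd : v - u ≠ 0 := sub_ne_zero.mpr hv
  have hda : 0 < ‖v - u‖ := norm_pos_iff.mpr hd
  have hss : 0 < s * (1 - s) := by nlinarith
  constructor
  · rw [hPe]
    exact mul_pos hda (Real.sqrt_pos.mpr hss)
  · have h1 : P.1 - u = (s : ℂ) * (v - u) := by rw [hPe]; ring
    have h2 : P.2 ^ 2 = s * (1 - s) * Complex.normSq (v - u) := by
      rw [hPe]
      show (‖v - u‖ * Real.sqrt (s * (1 - s))) ^ 2 = _
      rw [mul_pow, Real.sq_sqrt hss.le, Complex.sq_norm]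
      ring
    have h3 : (Complex.normSq (P.1 - u) + P.2 ^ 2 : ℝ) = s * Complex.normSq (v - u) := by
      rw [h1, h2, Complex.normSq_mul, Complex.normSq_ofReal]
      ring
    rw [h3, h1, Complex.inv_def]
    have hns : Complex.normSq (v - u) ≠ 0 := (Complex.normSq_pos.mpr hd).ne'
    have hs0' : (s : ℂ) ≠ 0 := by exact_mod_cast hs0.ne'
    rw [map_mul, Complex.conj_ofReal]
    push_cast
    field_simp

lemma ball_facts {r₀ : ℝ} {P : ℂ × ℝ} (h : inBall r₀ P) :
    ‖P.1‖ ^ 2 + P.2 ^ 2 + 1 ≤ P.2 * (2 * Real.cosh r₀) := by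
  obtain ⟨ht, hd⟩ := h
  unfold coshDist at hd
  simp only [sub_zero, mul_one] at hd
  have h2 : (‖P.1‖ ^ 2 + (P.2 - 1) ^ 2) / (2 * P.2) ≤ Real.cosh r₀ - 1 := by linarith
  rw [div_le_iff₀ (by linarith : (0:ℝ) < 2 * P.2)] at h2
  nlinarith

lemma ball_range {r₀ : ℝ} {P : ℂ × ℝ} (h : inBall r₀ P) :
    ‖P.1‖ ≤ 2 * Real.cosh r₀ ∧ 1 / (2 * Real.cosh r₀) ≤ P.2 ∧ P.2 ≤ 2 * Real.cosh r₀ := by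
  have q := ball_facts h
  have ht := h.1
  have hH : (2:ℝ) ≤ 2 * Real.cosh r₀ := by have := Real.one_le_cosh r₀; linarith
  have ha := norm_nonneg P.1
  have hz2 : ‖P.1‖ ^ 2 ≤ (2 * Real.cosh r₀) ^ 2 := by
    nlinarith [sq_nonneg (P.2 - Real.cosh r₀)]
  refine ⟨(pow_le_pow_iff_left₀ ha (by linarith) two_ne_zero).mp hz2, ?_, by nlinarith⟩
  rw [div_le_iff₀ (by linarith : (0:ℝ) < 2 * Real.cosh r₀)]
  nlinarith

lemma inv_identity (a b : ℂ) (t s : ℝ) (ht : 0 < t) (hs : 0 < s) :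
    Complex.normSq
        ((starRingEnd ℂ) a / ((Complex.normSq a + t ^ 2 : ℝ) : ℂ)
          - (starRingEnd ℂ) b / ((Complex.normSq b + s ^ 2 : ℝ) : ℂ))
      + (t / (Complex.normSq a + t ^ 2) - s / (Complex.normSq b + s ^ 2)) ^ 2
    = (Complex.normSq (a - b) + (t - s) ^ 2)
      / ((Complex.normSq a + t ^ 2) * (Complex.normSq b + s ^ 2)) := by
  have hN : (0:ℝ) < Complex.normSq a + t ^ 2 := add_pos_of_nonneg_of_pos (Complex.normSq_nonneg a) (pow_pos ht 2)
  have hN' : (0:ℝ) < Complex.normSq b + s ^ 2 := add_pos_of_nonneg_of_pos (Complex.normSq_nonneg b) (pow_pos hs 2)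
  set N : ℝ := Complex.normSq a + t ^ 2 with hNdef
  set N' : ℝ := Complex.normSq b + s ^ 2 with hN'def
  rw [Complex.normSq_sub, Complex.normSq_div, Complex.normSq_div, Complex.normSq_conj,
    Complex.normSq_conj, Complex.normSq_ofReal, Complex.normSq_ofReal, Complex.normSq_sub]
  have hre : ((starRingEnd ℂ) a / (N:ℂ) * (starRingEnd ℂ) ((starRingEnd ℂ) b / (N':ℂ))).re
      = (a * (starRingEnd ℂ) b).re / (N * N') := by
    rw [map_div₀, Complex.conj_conj, Complex.conj_ofReal]
    rw [div_mul_div_comm, ← Complex.ofReal_mul, Complex.div_ofReal_re]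
    congr 1
    have : ((starRingEnd ℂ) a * b) = (starRingEnd ℂ) (a * (starRingEnd ℂ) b) := by
      rw [map_mul, Complex.conj_conj]
    rw [this, Complex.conj_re]
  rw [hre]
  field_simp
  ring

lemma tau_bound (u z : ℂ) (t R S : ℝ) (hR : 1 ≤ R) (hS : 1 ≤ S) (hz : ‖z‖ ≤ R)
    (ht1 : 1 / S ≤ t) (ht2 : t ≤ S) :
    t / (Complex.normSq (z - u) + t ^ 2) * (1 + Complex.normSq u) ≤ (3 + 2 * R ^ 2) * S := by
  have hS0 : (0:ℝ) < S := by linarith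
  have ht0 : 0 < t := lt_of_lt_of_le (by positivity) ht1
  have hN : (0:ℝ) < Complex.normSq (z - u) + t ^ 2 :=
    add_pos_of_nonneg_of_pos (Complex.normSq_nonneg _) (pow_pos ht0 2)
  have hst : 1 ≤ S * t := by
    rw [div_le_iff₀ hS0] at ht1
    linarith
  have htri : ‖u‖ ≤ ‖z - u‖ + ‖z‖ := by
    calc ‖u‖ = ‖z - (z - u)‖ := by congr 1; ring
    _ ≤ ‖z‖ + ‖z - u‖ := norm_sub_le _ _
    _ = ‖z - u‖ + ‖z‖ := add_comm _ _
  have hu : Complex.normSq u ≤ 2 * Complex.normSq (z - u) + 2 * R ^ 2 := by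
    have h1 := Complex.sq_norm u
    have h2 := Complex.sq_norm (z - u)
    have h3 := Complex.sq_norm z
    have h4 : ‖u‖ ^ 2 ≤ (‖z - u‖ + ‖z‖) ^ 2 :=
      pow_le_pow_left₀ (norm_nonneg u) htri 2
    have h5 : ‖z‖ ^ 2 ≤ R ^ 2 := pow_le_pow_left₀ (norm_nonneg z) hz 2
    nlinarith [sq_nonneg (‖z - u‖ - ‖z‖)]
  rw [div_mul_eq_mul_div, div_le_iff₀ hN]
  have h5 : t ≤ S * t ^ 2 := by nlinarith [mul_le_mul_of_nonneg_left hst ht0.le]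
  have k1 : t * (1 + 2 * R ^ 2) ≤ (1 + 2 * R ^ 2) * (S * t ^ 2) :=
    (mul_comm t _) ▸ mul_le_mul_of_nonneg_left h5 (by positivity)
  have k2 : t * Complex.normSq u ≤ t * (2 * Complex.normSq (z - u) + 2 * R ^ 2) :=
    mul_le_mul_of_nonneg_left hu ht0.le
  have k3 : t * Complex.normSq (z - u) ≤ S * Complex.normSq (z - u) :=
    mul_le_mul_of_nonneg_right ht2 (Complex.normSq_nonneg _)
  nlinarith [Complex.normSq_nonneg (z - u), sq_nonneg R, mul_nonneg hS0.le (Complex.normSq_nonneg (z - u)), mul_nonneg (mul_nonneg hS0.le hS0.le) (Complex.normSq_nonneg (z - u)), mul_nonneg hS0.le (sq_nonneg t)]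

lemma pair_bound {u v₁ v₂ : ℂ} (hv₁ : v₁ ≠ u) (hv₂ : v₂ ≠ u) {P Q : ℂ × ℝ}
    (hP : P ∈ geodSet u v₁) (hQ : Q ∈ geodSet u v₂)
    {R S R' S' : ℝ} (hR : 1 ≤ R) (hS : 1 ≤ S) (hR' : 1 ≤ R') (hS' : 1 ≤ S')
    (hPz : ‖P.1‖ ≤ R) (hPt1 : 1 / S ≤ P.2) (hPt2 : P.2 ≤ S)
    (hQz : ‖Q.1‖ ≤ R') (hQt1 : 1 / S' ≤ Q.2) (hQt2 : Q.2 ≤ S')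
    {D : ℝ} (hD : coshDist P Q - 1 ≤ D) :
    (‖(v₁ - u)⁻¹ - (v₂ - u)⁻¹‖ * (1 + Complex.normSq u)) ^ 2
      ≤ 2 * ((3 + 2 * R ^ 2) * S) * ((3 + 2 * R' ^ 2) * S') * D := by
  obtain ⟨hPt0, hPw⟩ := geod_facts hv₁ hP
  obtain ⟨hQt0, hQw⟩ := geod_facts hv₂ hQ
  have hN : (0:ℝ) < Complex.normSq (P.1 - u) + P.2 ^ 2 :=
    add_pos_of_nonneg_of_pos (Complex.normSq_nonneg _) (pow_pos hPt0 2)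
  have hN' : (0:ℝ) < Complex.normSq (Q.1 - u) + Q.2 ^ 2 :=
    add_pos_of_nonneg_of_pos (Complex.normSq_nonneg _) (pow_pos hQt0 2)
  have hid := inv_identity (P.1 - u) (Q.1 - u) P.2 Q.2 hPt0 hQt0
  rw [hPw, hQw] at hid
  set τ : ℝ := P.2 / (Complex.normSq (P.1 - u) + P.2 ^ 2) with hτdef
  set τ' : ℝ := Q.2 / (Complex.normSq (Q.1 - u) + Q.2 ^ 2) with hτ'def
  have hsub : P.1 - u - (Q.1 - u) = P.1 - Q.1 := by ring
  rw [hsub] at hid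
  have h1 : Complex.normSq ((v₁ - u)⁻¹ - (v₂ - u)⁻¹)
      ≤ 2 * τ * τ' * (coshDist P Q - 1) := by
    have e2 : (Complex.normSq (P.1 - Q.1) + (P.2 - Q.2) ^ 2)
        / ((Complex.normSq (P.1 - u) + P.2 ^ 2) * (Complex.normSq (Q.1 - u) + Q.2 ^ 2))
        = 2 * τ * τ' * (coshDist P Q - 1) := by
      unfold coshDist
      rw [Complex.sq_norm, hτdef, hτ'def]
      field_simp
      ring
    rw [← e2, ← hid]
    nlinarith [sq_nonneg (τ - τ')]
  have hcosh0 : 0 ≤ coshDist P Q - 1 := by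
    unfold coshDist
    have : 0 ≤ (‖P.1 - Q.1‖ ^ 2 + (P.2 - Q.2) ^ 2) / (2 * P.2 * Q.2) :=
      div_nonneg (by positivity) (mul_nonneg (mul_nonneg (by norm_num) hPt0.le) hQt0.le)
    linarith
  have hτ0 : 0 ≤ τ * (1 + Complex.normSq u) :=
    mul_nonneg (div_nonneg hPt0.le hN.le) (add_nonneg zero_le_one (Complex.normSq_nonneg u))
  have hτ'0 : 0 ≤ τ' * (1 + Complex.normSq u) :=
    mul_nonneg (div_nonneg hQt0.le hN'.le) (add_nonneg zero_le_one (Complex.normSq_nonneg u))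
  have hτb := tau_bound u P.1 P.2 R S hR hS hPz hPt1 hPt2
  have hτ'b := tau_bound u Q.1 Q.2 R' S' hR' hS' hQz hQt1 hQt2
  have hK0 : (0:ℝ) ≤ (3 + 2 * R ^ 2) * S := le_trans hτ0 hτb
  have hD0 : 0 ≤ D := le_trans hcosh0 hD
  have m1 : (τ * (1 + Complex.normSq u)) * (τ' * (1 + Complex.normSq u))
      ≤ ((3 + 2 * R ^ 2) * S) * ((3 + 2 * R' ^ 2) * S') :=
    mul_le_mul hτb hτ'b hτ'0 hK0
  have m2 : ((τ * (1 + Complex.normSq u)) * (τ' * (1 + Complex.normSq u))) * (coshDist P Q - 1)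
      ≤ (((3 + 2 * R ^ 2) * S) * ((3 + 2 * R' ^ 2) * S')) * D :=
    mul_le_mul m1 hD hcosh0 (le_trans (mul_nonneg hτ0 hτ'0) m1)
  have hA : (‖(v₁ - u)⁻¹ - (v₂ - u)⁻¹‖ * (1 + Complex.normSq u)) ^ 2
      = Complex.normSq ((v₁ - u)⁻¹ - (v₂ - u)⁻¹) * (1 + Complex.normSq u) ^ 2 := by
    rw [mul_pow, Complex.sq_norm]
  rw [hA]
  have h2 : Complex.normSq ((v₁ - u)⁻¹ - (v₂ - u)⁻¹) * (1 + Complex.normSq u) ^ 2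
      ≤ (2 * τ * τ' * (coshDist P Q - 1)) * (1 + Complex.normSq u) ^ 2 :=
    mul_le_mul_of_nonneg_right h1 (sq_nonneg _)
  calc Complex.normSq ((v₁ - u)⁻¹ - (v₂ - u)⁻¹) * (1 + Complex.normSq u) ^ 2
      ≤ (2 * τ * τ' * (coshDist P Q - 1)) * (1 + Complex.normSq u) ^ 2 := h2
    _ = 2 * (((τ * (1 + Complex.normSq u)) * (τ' * (1 + Complex.normSq u))) * (coshDist P Q - 1)) := by ring
    _ ≤ 2 * ((((3 + 2 * R ^ 2) * S) * ((3 + 2 * R' ^ 2) * S')) * D) := by linarith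
    _ = 2 * ((3 + 2 * R ^ 2) * S) * ((3 + 2 * R' ^ 2) * S') * D := by ring

lemma cosh_one_lt_two : Real.cosh 1 < 2 := by
  rw [Real.cosh_eq]
  have h1 := Real.exp_one_lt_d9
  have h2 : Real.exp (-1) < 1 := by
    rw [← Real.exp_zero]
    exact Real.exp_lt_exp.mpr (by norm_num)
  linarith

lemma cosh_sub_one_le {x : ℝ} (h0 : 0 ≤ x) (h1 : x ≤ 1) : Real.cosh x - 1 ≤ 2 * x ^ 2 := by
  have a1 : 1 - x / 2 ≤ Real.exp (-(x / 2)) := by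
    have := Real.add_one_le_exp (-(x / 2)); linarith
  have a2 : (0:ℝ) < 1 - x / 2 := by linarith
  have hp : 0 < Real.exp (x / 2) := Real.exp_pos _
  have a3 : Real.exp (x / 2) ≤ 1 + x := by
    have hinv : Real.exp (-(x / 2)) = (Real.exp (x / 2))⁻¹ := Real.exp_neg _
    rw [hinv] at a1
    have h4 : (1 - x / 2) * Real.exp (x / 2) ≤ 1 := by
      calc (1 - x / 2) * Real.exp (x / 2) ≤ (Real.exp (x / 2))⁻¹ * Real.exp (x / 2) :=
            mul_le_mul_of_nonneg_right a1 hp.le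
        _ = 1 := inv_mul_cancel₀ hp.ne'
    nlinarith
  have key : Real.cosh x - 1 = (Real.exp (x / 2) - Real.exp (-(x / 2))) ^ 2 / 2 := by
    rw [Real.cosh_eq]
    have e1 : Real.exp x = Real.exp (x / 2) * Real.exp (x / 2) := by
      rw [← Real.exp_add]; ring_nf
    have e2 : Real.exp (-x) = Real.exp (-(x / 2)) * Real.exp (-(x / 2)) := by
      rw [← Real.exp_add]; ring_nf
    rw [e1, e2]
    have e3 : Real.exp (x / 2) * Real.exp (-(x / 2)) = 1 := by
      rw [← Real.exp_add]; simp
    nlinarith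
  have hmono : Real.exp (-(x / 2)) ≤ Real.exp (x / 2) := Real.exp_le_exp.mpr (by linarith)
  have hdiff : Real.exp (x / 2) - Real.exp (-(x / 2)) ≤ 3 * x / 2 := by linarith
  nlinarith

set_option maxHeartbeats 1600000 in
/-- Lemma A.4: for geodesics `h₁, h₂` with a common ideal endpoint `u`, both meeting the
ball `D_{r₀}(j)`, with `dH` a bound for the Hausdorff-type hyperbolic distance between
`h₁ ∩ D_{r₀}(j)` and `h₂ ∩ D_{r₀}(j)`, one has
`‖R_{h₁}^ε R_{h₂}^{-ε} - id‖ ≤ C dH ε` for all `ε > 0`, with `C = C(r₀)`. -/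
theorem stmt16 : ∀ r₀ > (0:ℝ), ∃ C > (0:ℝ), ∀ u v₁ v₂ : ℂ, v₁ ≠ u → v₂ ≠ u →
    (∃ P ∈ geodSet u v₁, inBall r₀ P) → (∃ P ∈ geodSet u v₂, inBall r₀ P) →
    ∀ dH : ℝ, 0 ≤ dH →
    (∀ P ∈ geodSet u v₁, inBall r₀ P → ∃ Q ∈ geodSet u v₂, coshDist P Q ≤ Real.cosh dH) →
    (∀ P ∈ geodSet u v₂, inBall r₀ P → ∃ Q ∈ geodSet u v₁, coshDist P Q ≤ Real.cosh dH) →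
    ∀ ε > (0:ℝ), mnorm (rotMat u v₁ ε * rotMat u v₂ (-ε) - 1) ≤ C * dH * ε := by
  intro r₀ hr₀
  have hcosh1 : (1:ℝ) ≤ Real.cosh r₀ := Real.one_le_cosh r₀
  obtain ⟨H, hHdef⟩ : ∃ x : ℝ, x = 2 * Real.cosh r₀ := ⟨_, rfl⟩
  have hH2 : (2:ℝ) ≤ H := by rw [hHdef]; linarith
  have hH1 : (1:ℝ) ≤ H := by linarith
  have hH4 : (1:ℝ) ≤ 4 * H := by linarith
  obtain ⟨K₀, hK₀def⟩ : ∃ x : ℝ, x = (3 + 2 * H ^ 2) * H := ⟨_, rfl⟩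
  obtain ⟨K₁, hK₁def⟩ : ∃ x : ℝ, x = (3 + 2 * (4 * H) ^ 2) * (4 * H) := ⟨_, rfl⟩
  have hK₀1 : (1:ℝ) ≤ K₀ := by rw [hK₀def]; nlinarith
  have hK₁1 : (1:ℝ) ≤ K₁ := by rw [hK₁def]; nlinarith
  obtain ⟨C₅, hC₅def⟩ : ∃ x : ℝ, x = 2 * K₀ * K₁ + 3 * K₀ * H ^ 2 + 1 := ⟨_, rfl⟩
  have hC₅0 : (0:ℝ) < C₅ := by rw [hC₅def]; nlinarith
  refine ⟨2 * C₅, by linarith, ?_⟩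
  intro u v₁ v₂ hv₁ hv₂ hex₁ hex₂ dH hdH hHaus₁ _hHaus₂ ε hε
  -- the quantity A
  obtain ⟨A, hAdef⟩ : ∃ x : ℝ,
    x = ‖(v₁ - u)⁻¹ - (v₂ - u)⁻¹‖ * (1 + Complex.normSq u) := ⟨_, rfl⟩
  have hA0' : 0 ≤ ‖(v₁ - u)⁻¹ - (v₂ - u)⁻¹‖ * (1 + Complex.normSq u) :=
    mul_nonneg (norm_nonneg _) (add_nonneg zero_le_one (Complex.normSq_nonneg u))
  have hA0 : 0 ≤ A := hAdef ▸ hA0'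
  have hAbound : A ≤ C₅ * dH := by
    obtain ⟨P, hPg, hPb⟩ := hex₁
    obtain ⟨hPz, hPt1, hPt2⟩ := ball_range hPb
    rw [← hHdef] at hPz hPt1 hPt2
    have hPt0 : 0 < P.2 := hPb.1
    rcases le_or_gt dH 1 with hdH1 | hdH1
    · -- close case: use the Hausdorff hypothesis
      obtain ⟨Q, hQg, hQd⟩ := hHaus₁ P hPg hPb
      have hQt0 : 0 < Q.2 := (geod_facts hv₂ hQg).1
      have hcoshdH : Real.cosh dH ≤ Real.cosh 1 :=
        Real.cosh_le_cosh.mpr (by rw [abs_of_nonneg hdH, abs_one]; exact hdH1)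
      have hc2 : coshDist P Q ≤ 2 := le_trans hQd (le_trans hcoshdH cosh_one_lt_two.le)
      have htt0 : (0:ℝ) < 2 * P.2 * Q.2 := mul_pos (mul_pos two_pos hPt0) hQt0
      have hkey : ‖P.1 - Q.1‖ ^ 2 + (P.2 - Q.2) ^ 2 ≤ 2 * P.2 * Q.2 := by
        unfold coshDist at hc2
        have hc3 : (‖P.1 - Q.1‖ ^ 2 + (P.2 - Q.2) ^ 2) / (2 * P.2 * Q.2) ≤ 1 := by
          linarith
        rw [div_le_iff₀ htt0] at hc3
        linarith
      have hsq : (P.2 - Q.2) ^ 2 ≤ 2 * P.2 * Q.2 := by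
        have := sq_nonneg (‖P.1 - Q.1‖)
        linarith
      have hQ4P : Q.2 ≤ 4 * P.2 := by nlinarith [hsq, hPt0, hQt0]
      have hP4Q : P.2 ≤ 4 * Q.2 := by nlinarith [hsq, hPt0, hQt0]
      have hQt2 : Q.2 ≤ 4 * H := by linarith
      have hQt1 : 1 / (4 * H) ≤ Q.2 := by
        have i1 : 1 ≤ P.2 * H :=
          (div_le_iff₀ (by linarith : (0:ℝ) < H)).mp hPt1
        have i2 : P.2 * H ≤ 4 * Q.2 * H :=
          mul_le_mul_of_nonneg_right hP4Q (by linarith)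
        rw [div_le_iff₀ (by linarith : (0:ℝ) < 4 * H)]
        linarith
      have h8 : ‖P.1 - Q.1‖ ^ 2 ≤ 8 * H ^ 2 := by
        have i3 : P.2 * Q.2 ≤ H * (4 * H) :=
          mul_le_mul hPt2 hQt2 hQt0.le (by linarith)
        have := sq_nonneg (P.2 - Q.2)
        linarith [hkey]
      have h9 : ‖P.1 - Q.1‖ ≤ 3 * H := by
        have i4 : ‖P.1 - Q.1‖ ^ 2 ≤ (3 * H) ^ 2 := by have := sq_nonneg H; nlinarith [h8]
        exact (pow_le_pow_iff_left₀ (norm_nonneg _) (by linarith) two_ne_zero).mp i4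
      have hQz : ‖Q.1‖ ≤ 4 * H := by
        have i5 : ‖Q.1‖ ≤ ‖P.1‖ + ‖P.1 - Q.1‖ := by
          calc ‖Q.1‖ = ‖P.1 - (P.1 - Q.1)‖ := by congr 1; ring
          _ ≤ ‖P.1‖ + ‖P.1 - Q.1‖ := norm_sub_le _ _
        linarith
      have hcd : coshDist P Q - 1 ≤ 2 * dH ^ 2 := by
        have := cosh_sub_one_le hdH hdH1
        linarith
      have hpb := pair_bound hv₁ hv₂ hPg hQg hH1 hH1 hH4 hH4 hPz hPt1 hPt2 hQz hQt1 hQt2 hcd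
      rw [← hAdef, ← hK₀def, ← hK₁def] at hpb
      have hC2 : 2 * K₀ * K₁ ≤ C₅ := by rw [hC₅def]; nlinarith
      have q1 : 4 * (K₀ * K₁) ≤ C₅ ^ 2 := by
        nlinarith [mul_le_mul hK₀1 hK₁1 zero_le_one (by linarith : (0:ℝ) ≤ K₀),
          mul_le_mul hC2 hC2 (by nlinarith) (by linarith : (0:ℝ) ≤ C₅)]
      have q2 := mul_le_mul_of_nonneg_right q1 (sq_nonneg dH)
      have hA2 : A ^ 2 ≤ (C₅ * dH) ^ 2 := by nlinarith
      exact (pow_le_pow_iff_left₀ hA0 (by positivity) two_ne_zero).mp hA2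
    · -- far case: dH > 1, use both balls
      obtain ⟨P', hP'g, hP'b⟩ := hex₂
      obtain ⟨hP'z, hP't1, hP't2⟩ := ball_range hP'b
      rw [← hHdef] at hP'z hP't1 hP't2
      have hP't0 : 0 < P'.2 := hP'b.1
      have hDfar : coshDist P P' - 1 ≤ 3 * H ^ 4 := by
        have htt0 : (0:ℝ) < 2 * P.2 * P'.2 := mul_pos (mul_pos two_pos hPt0) hP't0
        have i1 : 1 ≤ P.2 * H :=
          (div_le_iff₀ (by linarith : (0:ℝ) < H)).mp hPt1
        have i2 : 1 ≤ P'.2 * H :=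
          (div_le_iff₀ (by linarith : (0:ℝ) < H)).mp hP't1
        have i3 : (1:ℝ) * 1 ≤ (P.2 * H) * (P'.2 * H) :=
          mul_le_mul i1 i2 zero_le_one (mul_nonneg hPt0.le (by linarith))
        have iz : ‖P.1 - P'.1‖ ≤ 2 * H :=
          le_trans (norm_sub_le _ _) (by linarith)
        have iz2 : ‖P.1 - P'.1‖ ^ 2 ≤ (2 * H) ^ 2 :=
          pow_le_pow_left₀ (norm_nonneg _) iz 2
        have idz : (P.2 - P'.2) ^ 2 ≤ H ^ 2 := by nlinarith
        unfold coshDist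
        have hx : (‖P.1 - P'.1‖ ^ 2 + (P.2 - P'.2) ^ 2) / (2 * P.2 * P'.2)
            ≤ 3 * H ^ 4 := by
          rw [div_le_iff₀ htt0]
          nlinarith [i3, iz2, idz, hcosh1]
        linarith
      have hpb := pair_bound hv₁ hv₂ hPg hP'g hH1 hH1 hH1 hH1 hPz hPt1 hPt2 hP'z hP't1 hP't2 hDfar
      rw [← hAdef, ← hK₀def] at hpb
      have e1 : 3 * K₀ * H ^ 2 ≤ C₅ := by rw [hC₅def]; nlinarith
      have e2 : 2 * K₀ * K₀ * (3 * H ^ 4) ≤ (3 * K₀ * H ^ 2) ^ 2 := by nlinarith [sq_nonneg (K₀ * H ^ 2)]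
      have e3 : (3 * K₀ * H ^ 2) ^ 2 ≤ C₅ ^ 2 :=
        pow_le_pow_left₀ (by nlinarith) e1 2
      have hd2 : 1 ≤ dH ^ 2 := by nlinarith
      have e4 : C₅ ^ 2 ≤ C₅ ^ 2 * dH ^ 2 := by
        nlinarith [mul_le_mul_of_nonneg_left hd2 (sq_nonneg C₅)]
      have hA2 : A ^ 2 ≤ (C₅ * dH) ^ 2 := by nlinarith
      exact (pow_le_pow_iff_left₀ hA0 (by positivity) two_ne_zero).mp hA2
  -- final assembly
  rw [prod_eq u v₁ v₂ hv₁ hv₂ ε]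
  have hd₁ : v₁ - u ≠ 0 := sub_ne_zero.mpr hv₁
  have hd₂ : v₂ - u ≠ 0 := sub_ne_zero.mpr hv₂
  have hβ : (v₁ - v₂) * ((ee (-ε))^2 - 1) / ((v₁ - u) * (v₂ - u))
      = ((v₂ - u)⁻¹ - (v₁ - u)⁻¹) * ((ee (-ε))^2 - 1) := by
    field_simp
    try ring
    try tauto
  refine le_trans (mnorm_smul_le _ u) ?_
  rw [hβ, norm_mul, Complex.sq_norm]
  have habs1 : ‖(v₂ - u)⁻¹ - (v₁ - u)⁻¹‖ = ‖(v₁ - u)⁻¹ - (v₂ - u)⁻¹‖ :=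
    norm_sub_rev _ _
  rw [habs1]
  have hee := ee_sq_abs ε hε
  have hee0 := norm_nonneg ((ee (-ε))^2 - 1)
  calc ‖(v₁ - u)⁻¹ - (v₂ - u)⁻¹‖ * ‖(ee (-ε))^2 - 1‖ * (1 + Complex.normSq u)
      = A * ‖(ee (-ε))^2 - 1‖ := by rw [hAdef]; ring
    _ ≤ (C₅ * dH) * (2 * ε) := by
        apply mul_le_mul hAbound hee hee0
        positivity
    _ = 2 * C₅ * dH * ε := by ring
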